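/- Let N ≥ 2 and let (a^V,e^V) and (a^W,e^W) be A-module structures on I×{0,…,N}-graded spaces V and W, with every e^V_{i,n} invertible. Then the composite ∂₁ ∘ ∂₀ : L(V₀,W₀) → L(V₀,W₂) is zero. -/

import Mathlib

noncomputable section

/-- Cast of graded components of an `I × ℕ`-graded family of `ℂ`-vector spaces along an
equality of vertices. -/
def lcastN {I : Type} (V : I → ℕ → Type)
    [∀ i n, AddCommGroup (V i n)] [∀ i n, Module ℂ (V i n)]
    (n : ℕ) {i j : I} (hij : i = j) : V i n ≃ₗ[ℂ] V j n := by
  subst hij; exact LinearEquiv.refl ℂ (V i n)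

section Maps

variable {I H : Type} [DecidableEq I] [Fintype H]
  (s t : H → I) (bar : H → H)
  (s_bar : ∀ h, s (bar h) = t h) (t_bar : ∀ h, t (bar h) = s h)
  (eps : H → ℤ)
  (V W : I → ℕ → Type)
  [∀ i n, AddCommGroup (V i n)] [∀ i n, Module ℂ (V i n)]
  [∀ i n, AddCommGroup (W i n)] [∀ i n, Module ℂ (W i n)]
  (aV : ∀ (h : H) (n : ℕ), V (s h) n →ₗ[ℂ] V (t h) (n + 1))
  (eV : ∀ (i : I) (n : ℕ), V i n →ₗ[ℂ] V i (n + 1))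
  (aW : ∀ (h : H) (n : ℕ), W (s h) n →ₗ[ℂ] W (t h) (n + 1))
  (eW : ∀ (i : I) (n : ℕ), W i n →ₗ[ℂ] W i (n + 1))
  (eVinv : ∀ (i : I) (n : ℕ), V i (n + 1) →ₗ[ℂ] V i n)

/-- The map `∂₀ : L(V₀,W₀) → E(V₀,W₁)`,
`∂₀(φ)_h = a^W_{h,0}∘φ_{s(h)} − e^W_{t(h),0}∘φ_{t(h)}∘(e^V_{t(h),0})⁻¹∘a^V_{h,0}`. -/
def d0 (φ : ∀ i, V i 0 →ₗ[ℂ] W i 0) : ∀ h, V (s h) 0 →ₗ[ℂ] W (t h) 1 :=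
  fun h => aW h 0 ∘ₗ φ (s h) - eW (t h) 0 ∘ₗ φ (t h) ∘ₗ eVinv (t h) 0 ∘ₗ aV h 0

/-- The map `∂₁ : E(V₀,W₁) → L(V₀,W₂)`,
`∂₁(ψ)_k = Σ_{h : t(h) = k} ε(h)( a^W_{h,1}∘ψ_{h̄} + e^W_{k,1}∘ψ_h∘(e^V_{s(h),0})⁻¹∘a^V_{h̄,0} )`. -/
def d1 (ψ : ∀ h, V (s h) 0 →ₗ[ℂ] W (t h) 1) : ∀ k, V k 0 →ₗ[ℂ] W k 2 :=
  fun k => ∑ h : H, if hk : t h = k then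
    (eps h : ℂ) • ((lcastN W 2 hk).toLinearMap ∘ₗ
      (aW h 1 ∘ₗ (lcastN W 1 (t_bar h)).toLinearMap ∘ₗ ψ (bar h)
        + eW (t h) 1 ∘ₗ ψ h ∘ₗ eVinv (s h) 0 ∘ₗ (lcastN V 1 (t_bar h)).toLinearMap
            ∘ₗ aV (bar h) 0)
      ∘ₗ (lcastN V 0 ((s_bar h).trans hk)).symm.toLinearMap)
  else 0

end Maps



section AuxLemmas

variable {I H : Type}

lemma lcastN_trans_apply (X : I → ℕ → Type)
    [∀ i n, AddCommGroup (X i n)] [∀ i n, Module ℂ (X i n)]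
    (n : ℕ) {i j k : I} (h1 : i = j) (h2 : j = k) (x : X i n) :
    lcastN X n h2 (lcastN X n h1 x) = lcastN X n (h1.trans h2) x := by
  subst h1; subst h2; rfl

lemma lcastN_symm_apply (X : I → ℕ → Type)
    [∀ i n, AddCommGroup (X i n)] [∀ i n, Module ℂ (X i n)]
    (n : ℕ) {i j : I} (hij : i = j) (x : X j n) :
    (lcastN X n hij).symm x = lcastN X n hij.symm x := by
  subst hij; rfl

lemma lcastN_nat (X Y : I → ℕ → Type)
    [∀ i n, AddCommGroup (X i n)] [∀ i n, Module ℂ (X i n)]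
    [∀ i n, AddCommGroup (Y i n)] [∀ i n, Module ℂ (Y i n)]
    (m m' : ℕ) (f : ∀ i, X i m →ₗ[ℂ] Y i m') {i j : I} (hij : i = j)
    (x : X i m) : lcastN Y m' hij (f i x) = f j (lcastN X m hij x) := by
  subst hij; rfl

lemma lcastN_arrow (s t : H → I) (X : I → ℕ → Type)
    [∀ i n, AddCommGroup (X i n)] [∀ i n, Module ℂ (X i n)]
    (a : ∀ (h : H) (n : ℕ), X (s h) n →ₗ[ℂ] X (t h) (n + 1))
    {h g : H} (hg : h = g) (n : ℕ) (x : X (s h) n) :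
    a g n (lcastN X n (congrArg s hg) x) = lcastN X (n + 1) (congrArg t hg) (a h n x) := by
  subst hg; rfl

lemma key_sum [DecidableEq I] [Fintype H] (s t : H → I) (X : I → ℕ → Type)
    [∀ i n, AddCommGroup (X i n)] [∀ i n, Module ℂ (X i n)]
    (bar : H → H)
    (bar_invol : ∀ h, bar (bar h) = h)
    (s_bar : ∀ h, s (bar h) = t h) (t_bar : ∀ h, t (bar h) = s h)
    (eps : H → ℤ) (eps_bar : ∀ h, eps (bar h) = - eps h)
    (a : ∀ (h : H) (n : ℕ), X (s h) n →ₗ[ℂ] X (t h) (n + 1))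
    (hR1 : ∀ k : I, (∑ h : H, if hk : s h = k then
        (eps h : ℂ) • ((lcastN X 2 ((t_bar h).trans hk)).toLinearMap
          ∘ₗ a (bar h) 1 ∘ₗ (lcastN X 1 (s_bar h)).symm.toLinearMap
          ∘ₗ a h 0 ∘ₗ (lcastN X 0 hk).symm.toLinearMap) else 0) = 0)
    (k : I) (w : X k 0) :
    ∑ h : H, (if hk : t h = k then
      (eps h : ℂ) • lcastN X 2 hk (a h 1 (lcastN X 1 (t_bar h)
        (a (bar h) 0 ((lcastN X 0 ((s_bar h).trans hk)).symm w)))) else 0) = 0 := by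
  have hsum := congrArg (fun f : X k 0 →ₗ[ℂ] X k 2 => f w) (hR1 k)
  simp only [LinearMap.sum_apply, LinearMap.zero_apply,
    apply_dite (fun f : X k 0 →ₗ[ℂ] X k 2 => f w), LinearMap.smul_apply,
    LinearMap.comp_apply, LinearEquiv.coe_coe] at hsum
  have termwise : ∀ h : H,
      (if hk : t h = k then
        (eps h : ℂ) • lcastN X 2 hk (a h 1 (lcastN X 1 (t_bar h)
          (a (bar h) 0 ((lcastN X 0 ((s_bar h).trans hk)).symm w)))) else 0)
      = - (if hk : s (bar h) = k then
        (eps (bar h) : ℂ) • lcastN X 2 ((t_bar (bar h)).trans hk)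
          (a (bar (bar h)) 1 ((lcastN X 1 (s_bar (bar h))).symm
            (a (bar h) 0 ((lcastN X 0 hk).symm w)))) else 0) := by
    intro h
    by_cases hk : t h = k
    · have hk2 : s (bar h) = k := (s_bar h).trans hk
      rw [dif_pos hk, dif_pos hk2, eps_bar]
      push_cast
      rw [neg_smul, neg_neg]
      congr 1
      set y := a (bar h) 0 ((lcastN X 0 hk2).symm w) with hy
      have e1 : lcastN X 1 (t_bar h) y
          = lcastN X 1 (congrArg s (bar_invol h)) ((lcastN X 1 (s_bar (bar h))).symm y) := by
        rw [lcastN_symm_apply, lcastN_trans_apply]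
      rw [e1, lcastN_arrow s t X a (bar_invol h), lcastN_trans_apply]
    · have hk2 : ¬ s (bar h) = k := fun hc => hk ((s_bar h).symm.trans hc)
      rw [dif_neg hk, dif_neg hk2, neg_zero]
  calc (∑ h : H, if hk : t h = k then
      (eps h : ℂ) • lcastN X 2 hk (a h 1 (lcastN X 1 (t_bar h)
        (a (bar h) 0 ((lcastN X 0 ((s_bar h).trans hk)).symm w)))) else 0)
      = ∑ h : H, - (if hk : s (bar h) = k then
        (eps (bar h) : ℂ) • lcastN X 2 ((t_bar (bar h)).trans hk)
          (a (bar (bar h)) 1 ((lcastN X 1 (s_bar (bar h))).symm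
            (a (bar h) 0 ((lcastN X 0 hk).symm w)))) else 0) :=
        Finset.sum_congr rfl fun h _ => termwise h
    _ = - ∑ h : H, (if hk : s (bar h) = k then
        (eps (bar h) : ℂ) • lcastN X 2 ((t_bar (bar h)).trans hk)
          (a (bar (bar h)) 1 ((lcastN X 1 (s_bar (bar h))).symm
            (a (bar h) 0 ((lcastN X 0 hk).symm w)))) else 0) := by
        rw [Finset.sum_neg_distrib]
    _ = - ∑ g : H, (if hk : s g = k then
        (eps g : ℂ) • lcastN X 2 ((t_bar g).trans hk)
          (a (bar g) 1 ((lcastN X 1 (s_bar g)).symm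
            (a g 0 ((lcastN X 0 hk).symm w)))) else 0) := by
        congr 1
        exact Fintype.sum_bijective bar (Function.Involutive.bijective bar_invol) _ _
          (fun h => rfl)
    _ = 0 := by rw [hsum, neg_zero]

end AuxLemmas

/-- For `A`-module structures on `I×{0,…,N}`-graded spaces (`N ≥ 2`) with the
`e^V` invertible, the composite `∂₁ ∘ ∂₀` is zero. -/
theorem stmt11
    {I H : Type} [Fintype I] [Fintype H] [DecidableEq I]
    (s t : H → I) (bar : H → H)
    (bar_invol : ∀ h, bar (bar h) = h) (bar_ne : ∀ h, bar h ≠ h)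
    (s_bar : ∀ h, s (bar h) = t h) (t_bar : ∀ h, t (bar h) = s h)
    (eps : H → ℤ) (eps_pm : ∀ h, eps h = 1 ∨ eps h = -1)
    (eps_bar : ∀ h, eps (bar h) = - eps h)
    (N : ℕ) (hN : 2 ≤ N)
    (V W : I → ℕ → Type)
    [∀ i n, AddCommGroup (V i n)] [∀ i n, Module ℂ (V i n)]
    [∀ i n, FiniteDimensional ℂ (V i n)]
    [∀ i n, AddCommGroup (W i n)] [∀ i n, Module ℂ (W i n)]
    [∀ i n, FiniteDimensional ℂ (W i n)]
    (aV : ∀ (h : H) (n : ℕ), V (s h) n →ₗ[ℂ] V (t h) (n + 1))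
    (eV : ∀ (i : I) (n : ℕ), V i n →ₗ[ℂ] V i (n + 1))
    (aW : ∀ (h : H) (n : ℕ), W (s h) n →ₗ[ℂ] W (t h) (n + 1))
    (eW : ∀ (i : I) (n : ℕ), W i n →ₗ[ℂ] W i (n + 1))
    -- (R1) for V and W
    (hR1V : ∀ (k : I) (n : ℕ), n + 2 ≤ N →
      (∑ h : H, if hk : s h = k then
        (eps h : ℂ) • ((lcastN V (n + 2) ((t_bar h).trans hk)).toLinearMap
          ∘ₗ aV (bar h) (n + 1) ∘ₗ (lcastN V (n + 1) (s_bar h)).symm.toLinearMap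
          ∘ₗ aV h n ∘ₗ (lcastN V n hk).symm.toLinearMap) else 0) = 0)
    (hR1W : ∀ (k : I) (n : ℕ), n + 2 ≤ N →
      (∑ h : H, if hk : s h = k then
        (eps h : ℂ) • ((lcastN W (n + 2) ((t_bar h).trans hk)).toLinearMap
          ∘ₗ aW (bar h) (n + 1) ∘ₗ (lcastN W (n + 1) (s_bar h)).symm.toLinearMap
          ∘ₗ aW h n ∘ₗ (lcastN W n hk).symm.toLinearMap) else 0) = 0)
    -- (R2) for V and W
    (hR2V : ∀ (h : H) (n : ℕ), n + 2 ≤ N →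
      eV (t h) (n + 1) ∘ₗ aV h n = aV h (n + 1) ∘ₗ eV (s h) n)
    (hR2W : ∀ (h : H) (n : ℕ), n + 2 ≤ N →
      eW (t h) (n + 1) ∘ₗ aW h n = aW h (n + 1) ∘ₗ eW (s h) n)
    -- the e^V are invertible, with inverses eVinv
    (eVinv : ∀ (i : I) (n : ℕ), V i (n + 1) →ₗ[ℂ] V i n)
    (hinv : ∀ (i : I) (n : ℕ), n + 1 ≤ N →
      eVinv i n ∘ₗ eV i n = LinearMap.id ∧ eV i n ∘ₗ eVinv i n = LinearMap.id) :
    ∀ φ : ∀ i, V i 0 →ₗ[ℂ] W i 0,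
      d1 s t bar s_bar t_bar eps V W aV aW eW eVinv
        (d0 s t V W aV aW eW eVinv φ) = 0 := by
  intro φ
  funext k
  ext v
  have hN0 : (0 : ℕ) + 1 ≤ N := by omega
  set G : V k 2 →ₗ[ℂ] W k 2 :=
    eW k 1 ∘ₗ eW k 0 ∘ₗ φ k ∘ₗ eVinv k 0 ∘ₗ eVinv k 1 with hG
  have hterm : ∀ h : H,
      ((if hk : t h = k then
        (eps h : ℂ) • ((lcastN W 2 hk).toLinearMap ∘ₗ
          (aW h 1 ∘ₗ (lcastN W 1 (t_bar h)).toLinearMap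
              ∘ₗ d0 s t V W aV aW eW eVinv φ (bar h)
            + eW (t h) 1 ∘ₗ d0 s t V W aV aW eW eVinv φ h ∘ₗ eVinv (s h) 0
                ∘ₗ (lcastN V 1 (t_bar h)).toLinearMap ∘ₗ aV (bar h) 0)
          ∘ₗ (lcastN V 0 ((s_bar h).trans hk)).symm.toLinearMap)
      else 0) : V k 0 →ₗ[ℂ] W k 2) v
      = (if hk : t h = k then
          (eps h : ℂ) • lcastN W 2 hk (aW h 1 (lcastN W 1 (t_bar h)
            (aW (bar h) 0 ((lcastN W 0 ((s_bar h).trans hk)).symm (φ k v))))) else 0)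
        - G (if hk : t h = k then
          (eps h : ℂ) • lcastN V 2 hk (aV h 1 (lcastN V 1 (t_bar h)
            (aV (bar h) 0 ((lcastN V 0 ((s_bar h).trans hk)).symm v)))) else 0) := by
    intro h
    by_cases hk : t h = k
    · rw [dif_pos hk, dif_pos hk, dif_pos hk]
      have h2W : ∀ z : W (s h) 0, aW h 1 (eW (s h) 0 z) = eW (t h) 1 (aW h 0 z) :=
        fun z => by simpa using (LinearMap.congr_fun (hR2W h 0 hN) z).symm
      have hcomm : ∀ z : V (s h) 1,
          aV h 0 (eVinv (s h) 0 z) = eVinv (t h) 1 (aV h 1 z) := by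
        intro z
        have i1 := LinearMap.congr_fun (hinv (t h) 1 hN).1 (aV h 0 (eVinv (s h) 0 z))
        have hr := LinearMap.congr_fun (hR2V h 0 hN) (eVinv (s h) 0 z)
        have i2 := LinearMap.congr_fun (hinv (s h) 0 hN0).2 z
        simp only [LinearMap.comp_apply, LinearMap.id_apply] at i1 hr i2
        rw [← i1, hr, i2]
      have hA : φ (s (bar h)) ((lcastN V 0 ((s_bar h).trans hk)).symm v)
          = (lcastN W 0 ((s_bar h).trans hk)).symm (φ k v) := by
        rw [lcastN_symm_apply, lcastN_symm_apply,
          lcastN_nat V W 0 0 φ ((s_bar h).trans hk).symm]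
      have hPQ : aW h 1 ((lcastN W 1 (t_bar h)) (eW (t (bar h)) 0 (φ (t (bar h))
            (eVinv (t (bar h)) 0 (aV (bar h) 0
              ((lcastN V 0 ((s_bar h).trans hk)).symm v))))))
          = eW (t h) 1 (aW h 0 (φ (s h) (eVinv (s h) 0 ((lcastN V 1 (t_bar h))
              (aV (bar h) 0 ((lcastN V 0 ((s_bar h).trans hk)).symm v)))))) := by
        rw [lcastN_nat W W 0 1 (fun i => eW i 0) (t_bar h),
          lcastN_nat V W 0 0 φ (t_bar h),
          lcastN_nat V V 1 0 (fun i => eVinv i 0) (t_bar h)]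
        exact h2W _
      simp only [LinearMap.smul_apply, LinearMap.comp_apply, LinearMap.add_apply,
        LinearEquiv.coe_coe, d0, LinearMap.sub_apply]
      rw [hA]
      simp only [map_sub, map_add, smul_sub, smul_add]
      rw [hPQ, hcomm]
      simp only [lcastN_nat W W 1 2 (fun i => eW i 1) hk,
        lcastN_nat W W 0 1 (fun i => eW i 0) hk,
        lcastN_nat V W 0 0 φ hk,
        lcastN_nat V V 1 0 (fun i => eVinv i 0) hk,
        lcastN_nat V V 2 1 (fun i => eVinv i 1) hk]
      simp only [hG, LinearMap.comp_apply, map_smul]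
      abel
    · rw [dif_neg hk, dif_neg hk, dif_neg hk]
      simp
  calc (d1 s t bar s_bar t_bar eps V W aV aW eW eVinv
          (d0 s t V W aV aW eW eVinv φ) k) v
      = ∑ h : H, ((if hk : t h = k then
        (eps h : ℂ) • ((lcastN W 2 hk).toLinearMap ∘ₗ
          (aW h 1 ∘ₗ (lcastN W 1 (t_bar h)).toLinearMap
              ∘ₗ d0 s t V W aV aW eW eVinv φ (bar h)
            + eW (t h) 1 ∘ₗ d0 s t V W aV aW eW eVinv φ h ∘ₗ eVinv (s h) 0
                ∘ₗ (lcastN V 1 (t_bar h)).toLinearMap ∘ₗ aV (bar h) 0)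
          ∘ₗ (lcastN V 0 ((s_bar h).trans hk)).symm.toLinearMap)
      else 0) : V k 0 →ₗ[ℂ] W k 2) v := LinearMap.sum_apply _ _ _
    _ = ∑ h : H, ((if hk : t h = k then
          (eps h : ℂ) • lcastN W 2 hk (aW h 1 (lcastN W 1 (t_bar h)
            (aW (bar h) 0 ((lcastN W 0 ((s_bar h).trans hk)).symm (φ k v))))) else 0)
        - G (if hk : t h = k then
          (eps h : ℂ) • lcastN V 2 hk (aV h 1 (lcastN V 1 (t_bar h)
            (aV (bar h) 0 ((lcastN V 0 ((s_bar h).trans hk)).symm v)))) else 0)) :=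
        Finset.sum_congr rfl (fun h _ => hterm h)
    _ = (∑ h : H, (if hk : t h = k then
          (eps h : ℂ) • lcastN W 2 hk (aW h 1 (lcastN W 1 (t_bar h)
            (aW (bar h) 0 ((lcastN W 0 ((s_bar h).trans hk)).symm (φ k v))))) else 0))
        - ∑ h : H, G (if hk : t h = k then
          (eps h : ℂ) • lcastN V 2 hk (aV h 1 (lcastN V 1 (t_bar h)
            (aV (bar h) 0 ((lcastN V 0 ((s_bar h).trans hk)).symm v)))) else 0) :=
        Finset.sum_sub_distrib _ _
    _ = 0 := by
        rw [key_sum s t W bar bar_invol s_bar t_bar eps eps_bar aW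
            (fun k' => hR1W k' 0 hN) k (φ k v),
          ← map_sum,
          key_sum s t V bar bar_invol s_bar t_bar eps eps_bar aV
            (fun k' => hR1V k' 0 hN) k v,
          map_zero, sub_zero]
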